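/- Let G be a finite simple graph with two vertices s and t at distance k, and let G' be the associated graph on the vertices of shortest (s,t)-paths. Then G' contains no induced cycle of odd length at least 5, and no induced subgraph isomorphic to the complement of a cycle of odd length at least 5. -/

import Mathlib

/-- The set of vertices of `G` lying on shortest `(s,t)`-paths: those `v` with
`dist(s,v) = i` and `dist(v,t) = k - i` for some `i`, i.e. with
`dist(s,v) + dist(v,t) = k` (reachability is required so that the distances are
meaningful). -/
def OnSP {V : Type*} (G : SimpleGraph V) (s t : V) (k : ℕ) : Set V :=
  {v | G.Reachable s v ∧ G.Reachable v t ∧ G.dist s v + G.dist v t = k}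

/-- For `0 ≤ i ≤ k`, `D_i` is the set of vertices `v` with `dist(s,v) = i` and
`dist(v,t) = k - i`; a vertex of `OnSP G s t k` lies in `D_i` exactly when
`dist(s,v) = i`.  The graph `G'` on `OnSP G s t k`: two distinct vertices are adjacent
iff they lie in the same layer `D_i`, or they lie in consecutive layers `D_i`, `D_{i+1}`
and are non-adjacent in `G`. -/
def Gprime {V : Type*} (G : SimpleGraph V) (s t : V) (k : ℕ) :
    SimpleGraph (OnSP G s t k) :=
  SimpleGraph.fromRel (fun u v =>
    G.dist s u.val = G.dist s v.val ∨
      (G.dist s u.val + 1 = G.dist s v.val ∧ ¬G.Adj u.val v.val))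

/-- `p` is a shortest `(s,t)`-path in `H`, recorded as the sequence of its `L+1` vertices;
its length `L` is required to equal the distance between `s` and `t`. -/
def IsShortestSTPath {V : Type*} (H : SimpleGraph V) (s t : V) (L : ℕ)
    (p : Fin (L + 1) → V) : Prop :=
  p 0 = s ∧ p (Fin.last L) = t ∧ (∀ i : Fin L, H.Adj (p i.castSucc) (p i.succ)) ∧
    L = H.dist s t

/-- `A` is an independent set (of vertices) of the graph `H`. -/
def IsIndepSet {W : Type*} (H : SimpleGraph W) (A : Set W) : Prop :=
  ∀ u ∈ A, ∀ v ∈ A, ¬H.Adj u v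

lemma gp_adj_dist {V : Type*} {G : SimpleGraph V} {s t : V} {k : ℕ}
    {u v : OnSP G s t k} (h : (Gprime G s t k).Adj u v) :
    (G.dist s u.val : ℤ) - (G.dist s v.val : ℤ) ≤ 1 ∧
    (G.dist s v.val : ℤ) - (G.dist s u.val : ℤ) ≤ 1 := by
  rw [Gprime, SimpleGraph.fromRel_adj] at h
  obtain ⟨-, h⟩ := h
  rcases h with (h | ⟨h, -⟩) | (h | ⟨h, -⟩) <;> constructor <;> omega

lemma gp_adj_of_dist_eq {V : Type*} {G : SimpleGraph V} {s t : V} {k : ℕ}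
    {u v : OnSP G s t k} (hne : u ≠ v)
    (h : G.dist s u.val = G.dist s v.val) : (Gprime G s t k).Adj u v := by
  rw [Gprime, SimpleGraph.fromRel_adj]
  exact ⟨hne, Or.inl (Or.inl h)⟩

open Fin.NatCast Fin.CommRing in
/-- `G'` contains no induced cycle of odd length at least 5, and no induced
subgraph isomorphic to the complement of a cycle of odd length at least 5. -/
theorem stmt13 {V : Type*} [Fintype V] (G : SimpleGraph V) (s t : V) (k : ℕ)
    (hr : G.Reachable s t) (hd : G.dist s t = k) :
    ∀ n : ℕ, 5 ≤ n → n % 2 = 1 →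
      IsEmpty (SimpleGraph.cycleGraph n ↪g Gprime G s t k) ∧
      IsEmpty ((SimpleGraph.cycleGraph n)ᶜ ↪g Gprime G s t k) := by
  classical
  intro n hn5 hodd
  obtain ⟨m, rfl⟩ : ∃ m, n = m + 5 := ⟨n - 5, by omega⟩
  -- basic facts about casts into `Fin (m+5)`
  have hcasteq : ∀ a b : ℕ, a % (m+5) = b % (m+5) →
      ((a : ℕ) : Fin (m+5)) = ((b : ℕ) : Fin (m+5)) := by
    intro a b h
    apply Fin.ext
    rw [Fin.val_natCast, Fin.val_natCast, h]
  have hne : ∀ a b d : ℕ, b = a + d → 0 < d → d < m + 5 →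
      ((a : ℕ) : Fin (m+5)) ≠ ((b : ℕ) : Fin (m+5)) := by
    intro a b d hb h0 hlt h
    subst hb
    have h1 : ((a : ℕ) : Fin (m+5)) + ((d:ℕ) : Fin (m+5)) = ((a : ℕ) : Fin (m+5)) := by
      push_cast at h ⊢; linear_combination -h
    have h2 : ((d : ℕ) : Fin (m+5)) = 0 := add_eq_left.mp h1
    rw [Fin.natCast_eq_zero] at h2
    exact absurd (Nat.le_of_dvd h0 h2) (by omega)
  have hone : ∀ d : ℕ, ((d : Fin (m+5)) = 1 ↔ d % (m+5) = 1) := by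
    intro d
    rw [show (1 : Fin (m+5)) = ((1:ℕ) : Fin (m+5)) from (Nat.cast_one).symm, Fin.ext_iff,
      Fin.val_natCast, Fin.val_natCast, Nat.mod_eq_of_lt (show 1 < m+5 by omega)]
  have hadjiff : ∀ a d : ℕ,
      (SimpleGraph.cycleGraph (m+5)).Adj ((a : ℕ) : Fin (m+5)) ((a + d : ℕ) : Fin (m+5)) ↔
        ((d : Fin (m+5)) = 1 ∨ (-(d : Fin (m+5))) = 1) := by
    intro a d
    rw [@SimpleGraph.cycleGraph_adj (m+3)]
    constructor <;> rintro (h | h)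
    · right; push_cast at h ⊢; linear_combination h
    · left; push_cast at h ⊢; linear_combination h
    · right; push_cast at h ⊢; linear_combination h
    · left; push_cast at h ⊢; linear_combination h
  have hadj1 : ∀ a b : ℕ, b = a + 1 →
      (SimpleGraph.cycleGraph (m+5)).Adj ((a : ℕ) : Fin (m+5)) ((b : ℕ) : Fin (m+5)) := by
    intro a b hb; subst hb
    rw [hadjiff a 1]
    left; exact Nat.cast_one
  have hnadj : ∀ a b d : ℕ, b = a + d → 2 ≤ d → d + 1 < m + 5 →
      ¬ (SimpleGraph.cycleGraph (m+5)).Adj ((a : ℕ) : Fin (m+5)) ((b : ℕ) : Fin (m+5)) := by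
    intro a b d hb h2 hlt h
    subst hb
    rw [hadjiff a d] at h
    rcases h with h | h
    · rw [hone, Nat.mod_eq_of_lt (by omega)] at h; omega
    · have h1 : ((d + 1 : ℕ) : Fin (m+5)) = 0 := by push_cast; linear_combination -h
      rw [Fin.natCast_eq_zero] at h1
      exact absurd (Nat.le_of_dvd (by omega) h1) (by omega)
  constructor
  · -- no odd hole
    constructor
    intro f
    set X : Fin (m+5) → ℤ := fun i => (G.dist s ((f i : OnSP G s t k) : V) : ℤ) with hX
    have hA : ∀ a b : ℕ, (SimpleGraph.cycleGraph (m+5)).Adj ((a:ℕ) : Fin (m+5)) ((b:ℕ) : Fin (m+5)) →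
        X ((a:ℕ) : Fin (m+5)) - X ((b:ℕ) : Fin (m+5)) ≤ 1 ∧
        X ((b:ℕ) : Fin (m+5)) - X ((a:ℕ) : Fin (m+5)) ≤ 1 := by
      intro a b h
      exact gp_adj_dist (f.map_rel_iff.mpr h)
    have hB : ∀ a b : ℕ, ((a:ℕ) : Fin (m+5)) ≠ ((b:ℕ) : Fin (m+5)) →
        ¬ (SimpleGraph.cycleGraph (m+5)).Adj ((a:ℕ) : Fin (m+5)) ((b:ℕ) : Fin (m+5)) →
        X ((a:ℕ) : Fin (m+5)) ≠ X ((b:ℕ) : Fin (m+5)) := by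
      intro a b hab hnadj hxy
      apply hnadj
      apply f.map_rel_iff.mp
      apply gp_adj_of_dist_eq (fun h => hab (f.injective h))
      simp only [hX] at hxy
      exact_mod_cast hxy
    have hXc : ∀ a b : ℕ, a % (m+5) = b % (m+5) →
        X ((a:ℕ) : Fin (m+5)) = X ((b:ℕ) : Fin (m+5)) := by
      intro a b h
      rw [hcasteq a b h]
    have astep : ∀ a : ℕ,
        (X ((a:ℕ) : Fin (m+5)) < X ((a+2:ℕ) : Fin (m+5))) ↔
        (X ((a+1:ℕ) : Fin (m+5)) < X ((a+3:ℕ) : Fin (m+5))) := by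
      intro a
      have h01 := hA a (a+1) (hadj1 a (a+1) rfl)
      have h23 := hA (a+2) (a+3) (hadj1 (a+2) (a+3) (by omega))
      have hb02 := hB a (a+2) (hne a (a+2) 2 rfl (by omega) (by omega))
        (hnadj a (a+2) 2 rfl (by omega) (by omega))
      have hb03 := hB a (a+3) (hne a (a+3) 3 rfl (by omega) (by omega))
        (hnadj a (a+3) 3 rfl (by omega) (by omega))
      have hb13 := hB (a+1) (a+3) (hne (a+1) (a+3) 2 (by omega) (by omega) (by omega))
        (hnadj (a+1) (a+3) 2 (by omega) (by omega) (by omega))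
      omega
    have hb02' : ∀ a : ℕ, X ((a:ℕ) : Fin (m+5)) ≠ X ((a+2:ℕ) : Fin (m+5)) := fun a =>
      hB a (a+2) (hne a (a+2) 2 rfl (by omega) (by omega))
        (hnadj a (a+2) 2 rfl (by omega) (by omega))
    have hge : (2:ℤ) ≤ (((m+4)/2 : ℕ) : ℤ) := by
      have h2 : 2 ≤ (m+4)/2 := by omega
      exact_mod_cast h2
    have hlast := hA (m+4) (m+5) (hadj1 (m+4) (m+5) rfl)
    rw [hXc (m+5) 0 (by simp [Nat.mod_self])] at hlast
    by_cases h0 : X ((0:ℕ) : Fin (m+5)) < X ((0+2:ℕ) : Fin (m+5))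
    · have hall : ∀ a : ℕ, X ((a:ℕ) : Fin (m+5)) < X ((a+2:ℕ) : Fin (m+5)) := by
        intro a
        induction a with
        | zero => exact h0
        | succ i ih =>
          have h1 := (astep i).mp ih
          rw [show i+1+2 = i+3 from by omega]
          exact h1
      have hchain : ∀ j : ℕ, X ((0:ℕ) : Fin (m+5)) + j ≤ X ((2*j:ℕ) : Fin (m+5)) := by
        intro j
        induction j with
        | zero => norm_num
        | succ i ih =>
          have h1 := hall (2*i)
          rw [show 2*(i+1) = 2*i+2 from by ring]
          omega
      have hj := hchain ((m+4)/2)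
      rw [show 2*((m+4)/2) = m+4 from by omega] at hj
      omega
    · have hall : ∀ a : ℕ, X ((a+2:ℕ) : Fin (m+5)) < X ((a:ℕ) : Fin (m+5)) := by
        intro a
        induction a with
        | zero =>
          have h1 := hb02' 0
          omega
        | succ i ih =>
          have hni : ¬ (X ((i:ℕ):Fin (m+5)) < X ((i+2:ℕ):Fin (m+5))) := by omega
          have h2 : ¬ (X ((i+1:ℕ):Fin (m+5)) < X ((i+3:ℕ):Fin (m+5))) :=
            fun hlt => hni ((astep i).mpr hlt)
          have h3 := hb02' (i+1)
          rw [show i+1+2 = i+3 from by omega] at h3 ⊢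
          omega
      have hchain : ∀ j : ℕ, X ((2*j:ℕ) : Fin (m+5)) + j ≤ X ((0:ℕ) : Fin (m+5)) := by
        intro j
        induction j with
        | zero => norm_num
        | succ i ih =>
          have h1 := hall (2*i)
          rw [show 2*(i+1) = 2*i+2 from by ring]
          omega
      have hj := hchain ((m+4)/2)
      rw [show 2*((m+4)/2) = m+4 from by omega] at hj
      omega
  · -- no odd antihole
    constructor
    intro g
    set X : Fin (m+5) → ℤ := fun i => (G.dist s ((g i : OnSP G s t k) : V) : ℤ) with hX
    have hA : ∀ a b : ℕ, ((a:ℕ) : Fin (m+5)) ≠ ((b:ℕ) : Fin (m+5)) →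
        ¬ (SimpleGraph.cycleGraph (m+5)).Adj ((a:ℕ) : Fin (m+5)) ((b:ℕ) : Fin (m+5)) →
        X ((a:ℕ) : Fin (m+5)) - X ((b:ℕ) : Fin (m+5)) ≤ 1 ∧
        X ((b:ℕ) : Fin (m+5)) - X ((a:ℕ) : Fin (m+5)) ≤ 1 := by
      intro a b h1 h2
      exact gp_adj_dist (g.map_rel_iff.mpr (by rw [SimpleGraph.compl_adj]; exact ⟨h1, h2⟩))
    have hB : ∀ a b : ℕ,
        (SimpleGraph.cycleGraph (m+5)).Adj ((a:ℕ) : Fin (m+5)) ((b:ℕ) : Fin (m+5)) →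
        X ((a:ℕ) : Fin (m+5)) ≠ X ((b:ℕ) : Fin (m+5)) := by
      intro a b hadj hxy
      have hne' : ((a:ℕ) : Fin (m+5)) ≠ ((b:ℕ) : Fin (m+5)) := hadj.ne
      have : ((SimpleGraph.cycleGraph (m+5))ᶜ).Adj ((a:ℕ) : Fin (m+5)) ((b:ℕ) : Fin (m+5)) := by
        apply g.map_rel_iff.mp
        apply gp_adj_of_dist_eq (fun h => hne' (g.injective h))
        simp only [hX] at hxy
        exact_mod_cast hxy
      rw [SimpleGraph.compl_adj] at this
      exact this.2 hadj
    have hXc : ∀ a b : ℕ, a % (m+5) = b % (m+5) →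
        X ((a:ℕ) : Fin (m+5)) = X ((b:ℕ) : Fin (m+5)) := by
      intro a b h
      rw [hcasteq a b h]
    have bstep : ∀ a : ℕ,
        (X ((a:ℕ) : Fin (m+5)) < X ((a+1:ℕ) : Fin (m+5))) ↔
        ¬ (X ((a+1:ℕ) : Fin (m+5)) < X ((a+2:ℕ) : Fin (m+5))) := by
      intro a
      have h01 := hB a (a+1) (hadj1 a (a+1) rfl)
      have h12 := hB (a+1) (a+2) (hadj1 (a+1) (a+2) (by omega))
      have h02 := hA a (a+2) (hne a (a+2) 2 rfl (by omega) (by omega))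
        (hnadj a (a+2) 2 rfl (by omega) (by omega))
      omega
    -- parity contradiction
    have hflip : ∀ a : ℕ,
        (X ((a+1:ℕ) : Fin (m+5)) < X ((a+2:ℕ) : Fin (m+5))) ↔
        ¬ (X ((a:ℕ) : Fin (m+5)) < X ((a+1:ℕ) : Fin (m+5))) := by
      intro a
      rw [bstep a]
      tauto
    have hodd' : ∀ j : ℕ, (X ((2*j+1:ℕ) : Fin (m+5)) < X ((2*j+2:ℕ) : Fin (m+5))) ↔
        ¬ (X ((0:ℕ) : Fin (m+5)) < X ((1:ℕ) : Fin (m+5))) := by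
      intro j
      induction j with
      | zero => exact hflip 0
      | succ i ih =>
        rw [show 2*(i+1)+1 = (2*i+2)+1 from by ring, show 2*(i+1)+2 = (2*i+2)+2 from by ring,
          hflip (2*i+2), show (2*i+2) = (2*i+1)+1 from by ring, hflip (2*i+1), ih]
        tauto
    have hkey := hodd' ((m+4)/2)
    rw [show 2*((m+4)/2)+1 = m+5 from by omega, show 2*((m+4)/2)+2 = m+6 from by omega,
      hXc (m+5) 0 (by simp [Nat.mod_self]), hXc (m+6) 1 (by
        rw [show m+6 = (m+5)+1 from rfl, Nat.add_mod_left])] at hkey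
    tauto
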